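/- For x = h and y = hi in B² with 0 < h < 1 (so |x| = |y| and the angle between them is π/2), s_{B²}(x,y) ≤ c·w_{B²}(x,y) with sharp constant c = √((h₀²−2h₀+2)/(2h₀²−2√2·h₀+2)) ≈ 1.07313, where h₀ = (1−√(9−6√2))/(2−√2). -/

import Mathlib

set_option maxHeartbeats 1000000


open Metric Set

variable {E : Type*} [NormedAddCommGroup E] [NormedSpace ℝ E]

/-- Distance to the boundary of `G`. -/
noncomputable def dG (G : Set E) (x : E) : ℝ := Metric.infDist x (frontier G)

/-- The point pair function `p_G`. -/
noncomputable def pG (G : Set E) (x y : E) : ℝ :=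
  dist x y / Real.sqrt (dist x y ^ 2 + 4 * dG G x * dG G y)

/-- The triangular ratio metric `s_G`. -/
noncomputable def sG (G : Set E) (x y : E) : ℝ :=
  dist x y / ⨅ z : frontier G, (dist x (z : E) + dist (z : E) y)

/-- The `j*_G` metric. -/
noncomputable def jG (G : Set E) (x y : E) : ℝ :=
  dist x y / (dist x y + 2 * min (dG G x) (dG G y))

/-- The set `X̃` of points `x̃` with `|x−x̃| = 2 d_G(x)` whose midpoint with `x` lies on `∂G`. -/
def Xt (G : Set E) (x : E) : Set E :=
  {x' | dist x x' = 2 * dG G x ∧ (2⁻¹ : ℝ) • (x + x') ∈ frontier G}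

/-- The quasi-metric `w_G` defined for convex domains. -/
noncomputable def wG (G : Set E) (x y : E) : ℝ :=
  dist x y / min (Metric.infDist x (Xt G y)) (Metric.infDist y (Xt G x))

/-- `x̃ = x(2−|x|)/|x|`. -/
noncomputable def tilde (x : ℂ) : ℂ := (((2 - ‖x‖) / ‖x‖ : ℝ) : ℂ) * x

/-- The quasi-metric `w` of the unit disk (on nonzero points). -/
noncomputable def wB (x y : ℂ) : ℝ :=
  ‖x - y‖ / min ‖x - tilde y‖ ‖y - tilde x‖

/-! ### Auxiliary lemmas -/


lemma sqrt_add_sqrt_ge {a b m : ℝ} (ha : 0 ≤ a) (hb : 0 ≤ b) (hm : 0 ≤ m)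
    (h : ((m^2 - a - b)/2)^2 ≤ a * b) : m ≤ Real.sqrt a + Real.sqrt b := by
  have hab : (m^2-a-b)/2 ≤ Real.sqrt (a*b) := by
    calc (m^2-a-b)/2 ≤ |(m^2-a-b)/2| := le_abs_self _
    _ = Real.sqrt (((m^2-a-b)/2)^2) := (Real.sqrt_sq_eq_abs _).symm
    _ ≤ Real.sqrt (a*b) := Real.sqrt_le_sqrt h
  have h2 : m^2 ≤ (Real.sqrt a + Real.sqrt b)^2 := by
    have e : (Real.sqrt a + Real.sqrt b)^2 = a + b + 2*Real.sqrt (a*b) := by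
      rw [add_sq, Real.sq_sqrt ha, Real.sq_sqrt hb, Real.sqrt_mul ha]; ring
    rw [e]; linarith
  calc m = Real.sqrt (m^2) := (Real.sqrt_sq hm).symm
  _ ≤ Real.sqrt ((Real.sqrt a + Real.sqrt b)^2) := Real.sqrt_le_sqrt h2
  _ = _ := Real.sqrt_sq (by positivity)

lemma iInf_subtype_eq {S : Set ℂ} {f : ℂ → ℝ} {m : ℝ}
    (hlb : ∀ z ∈ S, m ≤ f z) (hw : ∃ z ∈ S, f z = m) :
    (⨅ z : S, f z) = m := by
  obtain ⟨z₀, hz₀, hfz₀⟩ := hw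
  haveI : Nonempty S := ⟨⟨z₀, hz₀⟩⟩
  apply le_antisymm
  · rw [← hfz₀]; exact ciInf_le (f := fun z : S => f z) ⟨m, by rintro x ⟨⟨z, hz⟩, rfl⟩; exact hlb z hz⟩ ⟨z₀, hz₀⟩
  · exact le_ciInf fun z => hlb z z.2

lemma lbA (h c s : ℝ) (h0 : 0 < h) (hh : 2*h^2 ≤ 1) (hc : c^2 + s^2 = 1) :
    2 * Real.sqrt (h^2 - Real.sqrt 2 * h + 1) ≤
      Real.sqrt ((h-c)^2+s^2) + Real.sqrt (c^2+(s-h)^2) := by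
  set q := Real.sqrt 2 with hq
  have hq2 : q^2 = 2 := Real.sq_sqrt (by norm_num)
  have hq0 : 0 ≤ q := Real.sqrt_nonneg 2
  have hX : 0 ≤ h^2 - q*h + 1 := by nlinarith [sq_nonneg (2*h - q)]
  have h2q : 2*h ≤ q := by
    have e : 2*h = Real.sqrt ((2*h)^2) := (Real.sqrt_sq (by linarith)).symm
    rw [e, hq]
    exact Real.sqrt_le_sqrt (by nlinarith)
  have hu : c + s ≤ q := by
    have h1 : c + s ≤ |c+s| := le_abs_self _
    have h2 : |c+s| = Real.sqrt ((c+s)^2) := (Real.sqrt_sq_eq_abs _).symm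
    have h3 : Real.sqrt ((c+s)^2) ≤ q := by
      rw [hq]; exact Real.sqrt_le_sqrt (by nlinarith [sq_nonneg (c-s)])
    linarith
  apply sqrt_add_sqrt_ge (by positivity) (by positivity) (by positivity)
  rw [mul_pow, Real.sq_sqrt hX]
  have hfac : 0 ≤ 4 + 4*h^2 - 5*q*h - h*(c+s) := by nlinarith
  nlinarith [mul_nonneg (mul_nonneg h0.le (sub_nonneg.2 hu)) hfac]

lemma lbB (h c s : ℝ) (h0 : 0 < h) (hh : 1 ≤ 2*h^2) (hc : c^2 + s^2 = 1) :
    Real.sqrt 2 ≤ Real.sqrt ((h-c)^2+s^2) + Real.sqrt (c^2+(s-h)^2) := by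
  apply sqrt_add_sqrt_ge (by positivity) (by positivity) (Real.sqrt_nonneg 2)
  rw [Real.sq_sqrt (by norm_num : (0:ℝ) ≤ 2)]
  nlinarith [sq_nonneg (h*(c+s) - 1)]

lemma wA (h : ℝ) :
    ∃ c s : ℝ, c^2 + s^2 = 1 ∧
      Real.sqrt ((h-c)^2+s^2) + Real.sqrt (c^2+(s-h)^2)
        = 2 * Real.sqrt (h^2 - Real.sqrt 2 * h + 1) := by
  have hq2 : (Real.sqrt 2)^2 = 2 := Real.sq_sqrt (by norm_num)
  refine ⟨Real.sqrt 2 / 2, Real.sqrt 2 / 2, by nlinarith, ?_⟩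
  have e1 : (h - Real.sqrt 2/2)^2 + (Real.sqrt 2/2)^2 = h^2 - Real.sqrt 2 * h + 1 := by
    nlinarith
  have e2 : (Real.sqrt 2/2)^2 + (Real.sqrt 2/2 - h)^2 = h^2 - Real.sqrt 2 * h + 1 := by
    nlinarith
  rw [e1, e2]; ring

lemma wBig (h : ℝ) (h0 : 0 < h) (h1 : h < 1) (hh : 1 ≤ 2*h^2) :
    ∃ c s : ℝ, c^2 + s^2 = 1 ∧
      Real.sqrt ((h-c)^2+s^2) + Real.sqrt (c^2+(s-h)^2) = Real.sqrt 2 := by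
  have ht0 : (0:ℝ) ≤ 2*h^2 - 1 := by linarith
  set t := Real.sqrt (2*h^2 - 1) with htdef
  have ht2 : t^2 = 2*h^2 - 1 := Real.sq_sqrt ht0
  have htn : 0 ≤ t := Real.sqrt_nonneg _
  have hth : t ≤ h^2 := by
    calc t ≤ Real.sqrt ((h^2)^2) := Real.sqrt_le_sqrt (by nlinarith [sq_nonneg (h^2-1)])
    _ = h^2 := Real.sqrt_sq (by positivity)
  refine ⟨(1+t)/(2*h), (1-t)/(2*h), ?_, ?_⟩
  · field_simp
    nlinarith
  · have e1 : (h - (1+t)/(2*h))^2 + ((1-t)/(2*h))^2 = h^2 - t := by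
      field_simp
      nlinarith
    have e2 : ((1+t)/(2*h))^2 + ((1-t)/(2*h) - h)^2 = h^2 + t := by
      field_simp
      nlinarith
    rw [e1, e2]
    have ha : (0:ℝ) ≤ h^2 - t := by linarith
    have hb : (0:ℝ) ≤ h^2 + t := by positivity
    have hsum : (Real.sqrt (h^2 - t) + Real.sqrt (h^2 + t))^2 = 2 := by
      rw [add_sq, Real.sq_sqrt ha, Real.sq_sqrt hb]
      rw [show 2 * Real.sqrt (h^2-t) * Real.sqrt (h^2+t)
            = 2 * (Real.sqrt (h^2-t) * Real.sqrt (h^2+t)) from by ring, ← Real.sqrt_mul ha]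
      have e3 : (h^2 - t) * (h^2 + t) = (1 - h^2)^2 := by nlinarith
      rw [e3, Real.sqrt_sq (by nlinarith)]
      ring
    calc Real.sqrt (h^2 - t) + Real.sqrt (h^2 + t)
        = Real.sqrt ((Real.sqrt (h^2 - t) + Real.sqrt (h^2 + t))^2) :=
          (Real.sqrt_sq (by positivity)).symm
    _ = Real.sqrt 2 := by rw [hsum]

lemma mem_sphere_iff_sq (z : ℂ) : z ∈ sphere (0:ℂ) 1 ↔ z.re^2 + z.im^2 = 1 := by
  rw [mem_sphere_zero_iff_norm]
  constructor
  · intro hz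
    have h2 := Complex.sq_norm z
    rw [hz] at h2
    simpa [Complex.normSq_apply, ← sq] using h2.symm
  · intro hz
    have e : ‖z‖ = Real.sqrt (z.re^2 + z.im^2) := by
      rw [Complex.norm_def, Complex.normSq_apply]; ring_nf
    rw [e, hz, Real.sqrt_one]

lemma dist_pair (h : ℝ) (z : ℂ) :
    dist (h:ℂ) z + dist z ((h:ℂ)*Complex.I) =
    Real.sqrt ((h - z.re)^2 + z.im^2) + Real.sqrt (z.re^2 + (z.im - h)^2) := by
  rw [Complex.dist_eq, Complex.dist_eq, Complex.norm_def, Complex.norm_def,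
      Complex.normSq_apply, Complex.normSq_apply]
  simp [Complex.sub_re, Complex.sub_im, Complex.mul_re, Complex.mul_im]
  ring_nf

lemma dist_xy (h : ℝ) (h0 : 0 ≤ h) :
    dist (h:ℂ) ((h:ℂ)*Complex.I) = h * Real.sqrt 2 := by
  rw [Complex.dist_eq, Complex.norm_def, Complex.normSq_apply]
  simp [Complex.sub_re, Complex.sub_im, Complex.mul_re, Complex.mul_im]
  rw [show h*h + h*h = h^2 * 2 from by ring, Real.sqrt_mul (by positivity), Real.sqrt_sq h0]

lemma sG_eq (h m : ℝ)
    (hlb : ∀ c s : ℝ, c^2+s^2 = 1 →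
      m ≤ Real.sqrt ((h-c)^2+s^2) + Real.sqrt (c^2+(s-h)^2))
    (hw : ∃ c s : ℝ, c^2+s^2 = 1 ∧
      Real.sqrt ((h-c)^2+s^2) + Real.sqrt (c^2+(s-h)^2) = m) :
    sG (ball (0:ℂ) 1) (h:ℂ) ((h:ℂ)*Complex.I) = dist (h:ℂ) ((h:ℂ)*Complex.I) / m := by
  unfold sG
  rw [frontier_ball (0:ℂ) one_ne_zero]
  congr 1
  apply iInf_subtype_eq (f := fun z => dist (h:ℂ) z + dist z ((h:ℂ)*Complex.I))
  · intro z hz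
    rw [dist_pair]
    exact hlb z.re z.im ((mem_sphere_iff_sq z).1 hz)
  · obtain ⟨c, s, hcs, hv⟩ := hw
    exact ⟨⟨c, s⟩, (mem_sphere_iff_sq _).2 (by simpa using hcs),
      by rw [dist_pair]; simpa using hv⟩

lemma wB_eq (h : ℝ) (h0 : 0 < h) :
    wB (h:ℂ) ((h:ℂ)*Complex.I) = (h * Real.sqrt 2) / Real.sqrt (h^2 + (2-h)^2) := by
  have habs_y : ‖(h:ℂ)*Complex.I‖ = h := by
    simp [map_mul, Complex.norm_real, abs_of_pos h0]
  have habs_x : ‖(h:ℂ)‖ = h := by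
    simp [Complex.norm_real, abs_of_pos h0]
  unfold wB tilde
  rw [habs_x, habs_y]
  have e1 : ‖(h:ℂ) - (((2-h)/h : ℝ):ℂ) * ((h:ℂ)*Complex.I)‖
      = Real.sqrt (h^2 + (2-h)^2) := by
    rw [Complex.norm_def, Complex.normSq_apply]
    simp [Complex.sub_re, Complex.sub_im, Complex.mul_re, Complex.mul_im]
    rw [show h*h + (2-h)/h*h*((2-h)/h*h) = h^2 + ((2-h)/h*h)^2 from by ring]
    rw [div_mul_cancel₀ _ (ne_of_gt h0)]
  have e2 : ‖(h:ℂ)*Complex.I - (((2-h)/h : ℝ):ℂ) * (h:ℂ)‖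
      = Real.sqrt (h^2 + (2-h)^2) := by
    rw [Complex.norm_def, Complex.normSq_apply]
    simp [Complex.sub_re, Complex.sub_im, Complex.mul_re, Complex.mul_im]
    rw [show (2-h)/h*h*((2-h)/h*h) + h*h = h^2 + ((2-h)/h*h)^2 from by ring]
    rw [div_mul_cancel₀ _ (ne_of_gt h0)]
  rw [e1, e2, min_self]
  congr 1
  rw [Complex.norm_def, Complex.normSq_apply]
  simp [Complex.sub_re, Complex.sub_im, Complex.mul_re, Complex.mul_im]
  rw [show h*h + h*h = h^2*2 from by ring, Real.sqrt_mul (by positivity), Real.sqrt_sq h0.le]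

/-- For `x = h`, `y = hi` in `B²` with `0 < h < 1`,
`s_{B²}(x,y) ≤ c · w_{B²}(x,y)` with sharp constant
`c = √((h₀²−2h₀+2)/(2h₀²−2√2 h₀+2))`, `h₀ = (1−√(9−6√2))/(2−√2)`. -/
theorem s_le_c_w_perp :
    ∀ h₀ c : ℝ, h₀ = (1 - Real.sqrt (9 - 6 * Real.sqrt 2)) / (2 - Real.sqrt 2) →
      c = Real.sqrt ((h₀ ^ 2 - 2 * h₀ + 2) / (2 * h₀ ^ 2 - 2 * Real.sqrt 2 * h₀ + 2)) →
      (∀ h : ℝ, 0 < h → h < 1 →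
        sG (Metric.ball (0 : ℂ) 1) (h : ℂ) ((h : ℂ) * Complex.I)
          ≤ c * wB (h : ℂ) ((h : ℂ) * Complex.I)) ∧
      sG (Metric.ball (0 : ℂ) 1) (h₀ : ℂ) ((h₀ : ℂ) * Complex.I)
        = c * wB (h₀ : ℂ) ((h₀ : ℂ) * Complex.I) := by
  intro h₀ c hh₀def hcdef
  set s := Real.sqrt 2 with hs
  set r := Real.sqrt (9 - 6*s) with hr
  have hs2 : s^2 = 2 := Real.sq_sqrt (by norm_num)
  have hs0 : 0 < s := Real.sqrt_pos.2 (by norm_num)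
  have hslb : 1.414 ≤ s := by nlinarith
  have hsub : s ≤ 1.4143 := by nlinarith
  have hr2 : r^2 = 9 - 6*s := Real.sq_sqrt (by nlinarith)
  have hr0 : 0 ≤ r := Real.sqrt_nonneg _
  have hrlb : 0.717 ≤ r := by nlinarith
  have hrub : r ≤ 0.7184 := by nlinarith
  have h2ms : 0 < 2 - s := by linarith
  have hh₀ : h₀ * (2 - s) = 1 - r := by
    rw [hh₀def]; exact div_mul_cancel₀ _ (ne_of_gt h2ms)
  have h₀lb : 0.48 ≤ h₀ := by rw [hh₀def, le_div_iff₀ h2ms]; nlinarith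
  have h₀ub : h₀ ≤ 0.484 := by rw [hh₀def, div_le_iff₀ h2ms]; nlinarith
  have h₀pos : 0 < h₀ := by linarith
  have h₀lt1 : h₀ < 1 := by linarith
  have h₀small : 2*h₀^2 ≤ 1 := by nlinarith
  have hN₀pos : 0 < h₀^2 - 2*h₀ + 2 := by nlinarith [sq_nonneg (h₀ - 1)]
  have hD₀pos : 0 < 2*h₀^2 - 2*s*h₀ + 2 := by nlinarith [sq_nonneg (s*h₀ - 1)]
  have hc0 : 0 ≤ c := hcdef ▸ Real.sqrt_nonneg _
  have hc2 : c^2 = (h₀^2 - 2*h₀ + 2) / (2*h₀^2 - 2*s*h₀ + 2) := by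
    rw [hcdef]
    exact Real.sq_sqrt (le_of_lt (div_pos hN₀pos hD₀pos))
  have master : ∀ h : ℝ, (h^2-2*h+2) * (2*h₀^2-2*s*h₀+2)
      ≤ (h₀^2-2*h₀+2) * (2*h^2-2*s*h+2) := by
    intro h
    have eN : (2-s)^2*(h₀^2-2*h₀+2) = (1-r)^2 - 2*(1-r)*(2-s) + 2*(2-s)^2 := by
      linear_combination (h₀*(2-s)+(1-r)-2*(2-s)) * hh₀
    have eD : (2-s)^2*(2*h₀^2-2*s*h₀+2) = 2*(1-r)^2 - 2*s*(1-r)*(2-s) + 2*(2-s)^2 := by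
      linear_combination (2*h₀*(2-s) + 2*(1-r) - 2*s*(2-s)) * hh₀
    have hsq : 0 < (2-s)^2 := by positivity
    rw [← mul_le_mul_iff_right₀ hsq,
      show (2-s)^2 * ((h^2-2*h+2) * (2*h₀^2-2*s*h₀+2))
        = (h^2-2*h+2) * ((2-s)^2*(2*h₀^2-2*s*h₀+2)) from by ring,
      show (2-s)^2 * ((h₀^2-2*h₀+2) * (2*h^2-2*s*h+2))
        = ((2-s)^2*(h₀^2-2*h₀+2)) * (2*h^2-2*s*h+2) from by ring, eN, eD]
    have key : ((1-r)^2 - 2*(1-r)*(2-s) + 2*(2-s)^2) * (2*h^2-2*s*h+2)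
        - (h^2-2*h+2) * (2*(1-r)^2 - 2*s*(1-r)*(2-s) + 2*(2-s)^2)
        = 2*r*((2-s)*h - (1-r))^2 := by
      linear_combination (2-2*r-4*h+2*h*s) * hr2 + (-4+4*r+8*h-4*h*s) * hs2
    linarith [mul_nonneg hr0 (sq_nonneg ((2-s)*h - (1-r))), key]
  have branch2 : (5/2 - s) * (2*h₀^2-2*s*h₀+2) ≤ h₀^2-2*h₀+2 := by nlinarith
  constructor
  · intro h h0 h1
    rw [wB_eq h h0]
    have hBarg : h^2 + (2-h)^2 = 2*(h^2 - 2*h + 2) := by ring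
    have hBpos : 0 < Real.sqrt (h^2 + (2-h)^2) := Real.sqrt_pos.2 (by nlinarith [sq_nonneg (h-1)])
    rcases le_or_gt (2*h^2) 1 with hsm | hbig
    · -- small h
      have hY : (0:ℝ) < h^2 - s*h + 1 := by nlinarith [sq_nonneg (2*h - s)]
      have hApos : 0 < 2*Real.sqrt (h^2 - s*h + 1) := by positivity
      rw [sG_eq h (2*Real.sqrt (h^2 - s*h + 1))
          (fun p q hpq => lbA h p q h0 hsm hpq) (wA h), dist_xy h h0.le]
      have hkey : Real.sqrt (h^2+(2-h)^2) ≤ c * (2*Real.sqrt (h^2 - s*h + 1)) := by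
        have e2 : c * (2*Real.sqrt (h^2-s*h+1)) = Real.sqrt (c^2 * (4*(h^2-s*h+1))) := by
          rw [Real.sqrt_mul (sq_nonneg c),
            show (4:ℝ)*(h^2-s*h+1) = 2^2*(h^2-s*h+1) from by ring,
            Real.sqrt_mul (by norm_num : (0:ℝ) ≤ 2^2), Real.sqrt_sq hc0,
            Real.sqrt_sq (by norm_num : (0:ℝ) ≤ 2)]
          try ring
        rw [e2]
        apply Real.sqrt_le_sqrt
        rw [hc2, div_mul_eq_mul_div, le_div_iff₀ hD₀pos, hBarg]
        nlinarith [master h]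
      rw [show c * (h * Real.sqrt 2 / Real.sqrt (h^2+(2-h)^2))
          = (h * Real.sqrt 2 * c) / Real.sqrt (h^2+(2-h)^2) from by ring,
        div_le_div_iff₀ hApos hBpos]
      calc h * Real.sqrt 2 * Real.sqrt (h^2+(2-h)^2)
          ≤ h * Real.sqrt 2 * (c * (2*Real.sqrt (h^2 - s*h + 1))) := by
            apply mul_le_mul_of_nonneg_left hkey (by positivity)
      _ = h * Real.sqrt 2 * c * (2*Real.sqrt (h^2 - s*h + 1)) := by ring
    · -- large h
      have hbig' : 1 ≤ 2*h^2 := le_of_lt hbig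
      rw [sG_eq h (Real.sqrt 2) (fun p q hpq => lbB h p q h0 hbig' hpq) (wBig h h0 h1 hbig'),
        dist_xy h h0.le, mul_div_assoc, div_self (ne_of_gt hs0), mul_one]
      have h2s : s ≤ 2*h := by nlinarith
      have hNle : h^2 - 2*h + 2 ≤ 5/2 - s := by
        nlinarith [mul_nonneg (sub_nonneg.2 h2s) (sub_nonneg.2 h1.le)]
      have hkey : Real.sqrt (h^2+(2-h)^2) ≤ s * c := by
        have e2 : s * c = Real.sqrt (2 * ((h₀^2-2*h₀+2)/(2*h₀^2-2*s*h₀+2))) := by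
          rw [Real.sqrt_mul (by norm_num : (0:ℝ) ≤ 2), ← hcdef, hs]
        rw [e2, hBarg]
        apply Real.sqrt_le_sqrt
        rw [mul_div_assoc' 2, le_div_iff₀ hD₀pos]
        linarith [mul_le_mul_of_nonneg_right hNle hD₀pos.le, branch2]
      rw [show c * (h * Real.sqrt 2 / Real.sqrt (h^2+(2-h)^2))
          = (h * (Real.sqrt 2 * c)) / Real.sqrt (h^2+(2-h)^2) from by ring,
        le_div_iff₀ hBpos]
      calc h * Real.sqrt (h^2+(2-h)^2) ≤ h * (s * c) := by
            apply mul_le_mul_of_nonneg_left hkey h0.le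
      _ = h * (Real.sqrt 2 * c) := by rw [hs]
  · -- equality at h₀
    rw [wB_eq h₀ h₀pos]
    have hY : (0:ℝ) < h₀^2 - s*h₀ + 1 := by nlinarith [sq_nonneg (2*h₀ - s)]
    rw [sG_eq h₀ (2*Real.sqrt (h₀^2 - s*h₀ + 1))
        (fun p q hpq => lbA h₀ p q h₀pos h₀small hpq) (wA h₀), dist_xy h₀ h₀pos.le]
    have hBarg : h₀^2 + (2-h₀)^2 = 2*(h₀^2 - 2*h₀ + 2) := by ring
    have hBpos : 0 < Real.sqrt (h₀^2 + (2-h₀)^2) :=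
      Real.sqrt_pos.2 (by nlinarith [sq_nonneg (h₀-1)])
    have hApos : 0 < 2*Real.sqrt (h₀^2 - s*h₀ + 1) := by positivity
    have hXpos : 0 < h₀ * Real.sqrt 2 := by positivity
    -- both sides nonneg; show squares equal
    have lhs_nn : 0 ≤ h₀ * Real.sqrt 2 / (2*Real.sqrt (h₀^2 - s*h₀ + 1)) := by positivity
    have rhs_nn : 0 ≤ c * (h₀ * Real.sqrt 2 / Real.sqrt (h₀^2 + (2-h₀)^2)) := by positivity
    have hsqeq : (h₀ * Real.sqrt 2 / (2*Real.sqrt (h₀^2 - s*h₀ + 1)))^2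
        = (c * (h₀ * Real.sqrt 2 / Real.sqrt (h₀^2 + (2-h₀)^2)))^2 := by
      simp only [mul_pow, div_pow]
      rw [Real.sq_sqrt (le_of_lt hY), Real.sq_sqrt (by norm_num : (0:ℝ) ≤ 2),
        Real.sq_sqrt (by positivity : (0:ℝ) ≤ h₀^2 + (2-h₀)^2), hc2, hBarg]
      rw [show (2:ℝ)^2 * (h₀^2 - s*h₀ + 1) = 2*(2*h₀^2-2*s*h₀+2) from by ring]
      rw [div_mul_div_comm, div_eq_div_iff (mul_pos two_pos hD₀pos).ne'
        (mul_pos hD₀pos (mul_pos two_pos hN₀pos)).ne']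
      ring
    calc h₀ * Real.sqrt 2 / (2*Real.sqrt (h₀^2 - s*h₀ + 1))
        = Real.sqrt ((h₀ * Real.sqrt 2 / (2*Real.sqrt (h₀^2 - s*h₀ + 1)))^2) :=
          (Real.sqrt_sq lhs_nn).symm
    _ = Real.sqrt ((c * (h₀ * Real.sqrt 2 / Real.sqrt (h₀^2 + (2-h₀)^2)))^2) := by rw [hsqeq]
    _ = c * (h₀ * Real.sqrt 2 / Real.sqrt (h₀^2 + (2-h₀)^2)) := Real.sqrt_sq rhs_nn
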